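/- Let G be a group, λ a nonempty set, and σ any automorphism of the Brandt semigroup B_λ(G). Then there exist a group automorphism h : G → G, a bijection φ : λ → λ, and a map u : λ → G such that σ(α, g, β) = (φ(α), u(α)·h(g)·(u(β))⁻¹, φ(β)) for all α, β ∈ λ and all g ∈ G, and σ(0) = 0. -/

import Mathlib

/-- The Brandt semigroup `B_Λ(G)` over a group `G`: its underlying set is
`(Λ × G × Λ) ∪ {0}`, where `none` plays the role of the zero `0`. -/
def BrandtG (Λ G : Type*) : Type _ :=
  Option (Λ × G × Λ)

namespace BrandtG

variable {Λ G : Type*}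

instance : Zero (BrandtG Λ G) := ⟨none⟩

open Classical in
/-- `(α, a, β)·(γ, b, δ) = (α, ab, δ)` if `β = γ`, and `0` otherwise;
`0` is a two-sided zero. -/
noncomputable instance [Mul G] : Mul (BrandtG Λ G) :=
  ⟨fun x y =>
    match x, y with
    | some (α, a, β), some (γ, b, δ) =>
        if β = γ then some (α, a * b, δ) else 0
    | _, _ => 0⟩

end BrandtG

/-- An automorphism of a semigroup: a bijective map preserving the multiplication. -/
def IsSemigroupAut {T : Type*} [Mul T] (σ : T → T) : Prop :=
  Function.Bijective σ ∧ ∀ x y : T, σ (x * y) = σ x * σ y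

section Aux

variable {Λ G : Type*} [Group G]

lemma BrandtG.some_mul_some (α β γ δ : Λ) (a b : G) :
    @HMul.hMul (BrandtG Λ G) (BrandtG Λ G) (BrandtG Λ G) _ (some (α, a, β)) (some (γ, b, δ)) =
      @ite (BrandtG Λ G) (β = γ) (Classical.propDecidable _) (some (α, a * b, δ)) 0 := rfl

lemma BrandtG.some_mul_some_eq (α β δ : Λ) (a b : G) :
    @HMul.hMul (BrandtG Λ G) (BrandtG Λ G) (BrandtG Λ G) _ (some (α, a, β)) (some (β, b, δ)) =
      some (α, a * b, δ) := by
  rw [BrandtG.some_mul_some]; exact if_pos rfl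

lemma BrandtG.some_mul_zero (p : Λ × G × Λ) :
    @HMul.hMul (BrandtG Λ G) (BrandtG Λ G) (BrandtG Λ G) _ (some p) 0 = 0 := by
  rcases p with ⟨α, a, β⟩; rfl

lemma BrandtG.zero_mul_any (x : BrandtG Λ G) :
    @HMul.hMul (BrandtG Λ G) (BrandtG Λ G) (BrandtG Λ G) _ 0 x = 0 := by
  rcases x with _ | ⟨α, a, β⟩ <;> rfl

omit [Group G] in
lemma BrandtG.zero_ne_some (p : Λ × G × Λ) : (0 : BrandtG Λ G) ≠ some p :=
  fun h => Option.some_ne_none p h.symm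

omit [Group G] in
lemma BrandtG.some_inj {p q : Λ × G × Λ} :
    @Eq (BrandtG Λ G) (some p) (some q) ↔ p = q :=
  Option.some_inj

end Aux

/-- Let `G` be a group, `Λ` a nonempty set, and `σ` any automorphism of the Brandt
semigroup `B_Λ(G)`. Then there exist a group automorphism `h : G → G`, a bijection
`φ : Λ → Λ`, and a map `u : Λ → G` such that
`σ(α, g, β) = (φ(α), u(α)·h(g)·(u(β))⁻¹, φ(β))` for all `α, β ∈ Λ` and all `g ∈ G`,
and `σ(0) = 0`. -/
theorem stmt_3 {Λ G : Type*} [Nonempty Λ] [Group G]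
    (σ : BrandtG Λ G → BrandtG Λ G) (hσ : IsSemigroupAut σ) :
    ∃ (h : G ≃* G) (φ : Λ ≃ Λ) (u : Λ → G),
      (∀ (α β : Λ) (g : G),
        σ (some (α, g, β)) = some (φ α, u α * h g * (u β)⁻¹, φ β)) ∧
      σ 0 = 0 := by
  obtain ⟨⟨inj, surj⟩, hm⟩ := hσ
  -- σ 0 absorbs everything on the right
  have habs : ∀ y, σ 0 * y = σ 0 := by
    intro y
    obtain ⟨x, rfl⟩ := surj y
    rw [← hm, BrandtG.zero_mul_any]
  have h0 : σ 0 = 0 := by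
    rcases h : σ 0 with _ | p
    · rfl
    · exfalso
      have h2 := habs 0
      rw [h, BrandtG.some_mul_zero] at h2
      exact Option.some_ne_none p h2.symm
  have hne : ∀ p : Λ × G × Λ, σ (some p) ≠ 0 := by
    intro p h
    have := inj (h.trans h0.symm)
    exact Option.some_ne_none p this
  -- images of the idempotents e_α
  have hidem : ∀ α : Λ, ∃ γ : Λ, σ (some (α, (1 : G), α)) = some (γ, 1, γ) := by
    intro α
    rcases h : σ (some (α, (1 : G), α)) with _ | ⟨p, k, q⟩
    · exact absurd h (hne _)
    · have he : σ (some (α, (1 : G), α)) * σ (some (α, (1 : G), α))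
          = σ (some (α, (1 : G), α)) := by
        erw [← hm, BrandtG.some_mul_some_eq, one_mul]
      rw [h, BrandtG.some_mul_some] at he
      by_cases hq : q = p
      · subst hq
        have he := Option.some_inj.mp ((if_pos rfl).symm.trans he)
        have hk : k = 1 := mul_eq_right.mp (congrArg (fun t => t.2.1) he)
        exact ⟨q, by rw [hk]⟩
      · exact absurd ((if_neg hq).symm.trans he) (BrandtG.zero_ne_some _)
  choose φ0 hφ0 using hidem
  have hφinj : Function.Injective φ0 := by
    intro α β h
    have h1 : σ (some (α, (1 : G), α)) = σ (some (β, (1 : G), β)) := by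
      rw [hφ0, hφ0, h]
    have h2 := inj h1
    rw [BrandtG.some_inj] at h2
    exact congrArg Prod.fst h2
  -- the image of (α, g, β) has coordinates (φ0 α, ·, φ0 β)
  have hcoord : ∀ (α β : Λ) (g : G),
      ∃ k : G, σ (some (α, g, β)) = some (φ0 α, k, φ0 β) := by
    intro α β g
    rcases h : σ (some (α, g, β)) with _ | ⟨p, k, q⟩
    · exact absurd h (hne _)
    · have h1 : σ (some (α, (1 : G), α)) * σ (some (α, g, β)) = σ (some (α, g, β)) := by
        erw [← hm, BrandtG.some_mul_some_eq, one_mul]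
      have h2 : σ (some (α, g, β)) * σ (some (β, (1 : G), β)) = σ (some (α, g, β)) := by
        erw [← hm, BrandtG.some_mul_some_eq, mul_one]
      rw [h, hφ0, BrandtG.some_mul_some] at h1
      rw [h, hφ0, BrandtG.some_mul_some] at h2
      by_cases hp : φ0 α = p
      · by_cases hq : q = φ0 β
        · exact ⟨k, by rw [← hp, hq]⟩
        · exact absurd ((if_neg hq).symm.trans h2) (BrandtG.zero_ne_some _)
      · exact absurd ((if_neg hp).symm.trans h1) (BrandtG.zero_ne_some _)
  choose f hf using hcoord
  -- multiplicativity of f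
  have fkey : ∀ (α β γ : Λ) (g g' : G), f α γ (g * g') = f α β g * f β γ g' := by
    intro α β γ g g'
    have h1 := hm (some (α, g, β)) (some (β, g', γ))
    rw [BrandtG.some_mul_some_eq, hf, hf, hf, BrandtG.some_mul_some_eq,
      BrandtG.some_inj] at h1
    exact congrArg (fun t => t.2.1) h1
  have fone : ∀ α, f α α (1 : G) = 1 := by
    intro α
    have h1 := (hf α α 1).symm.trans (hφ0 α)
    rw [BrandtG.some_inj] at h1
    exact congrArg (fun t => t.2.1) h1
  set α₀ : Λ := Classical.arbitrary Λ with hα₀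
  -- f α₀ α₀ is injective and surjective
  have hinj : Function.Injective (f α₀ α₀) := by
    intro g g' e
    have h1 : σ (some (α₀, g, α₀)) = σ (some (α₀, g', α₀)) := by
      rw [hf, hf, e]
    have h2 := inj h1
    rw [BrandtG.some_inj] at h2
    exact congrArg (fun t => t.2.1) h2
  have hsurj : Function.Surjective (f α₀ α₀) := by
    intro k
    obtain ⟨x, hx⟩ := surj (some (φ0 α₀, k, φ0 α₀))
    rcases x with _ | ⟨p, g, q⟩
    · exact absurd (h0.symm.trans hx) (BrandtG.zero_ne_some _)
    · rw [hf, BrandtG.some_inj] at hx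
      simp only [Prod.mk.injEq] at hx
      obtain ⟨e1, e2, e3⟩ := hx
      have hp := hφinj e1
      have hq := hφinj e3
      subst hp; subst hq
      exact ⟨g, e2⟩
  have hφsurj : Function.Surjective φ0 := by
    intro γ
    obtain ⟨x, hx⟩ := surj (some (γ, (1 : G), γ))
    rcases x with _ | ⟨p, g, q⟩
    · exact absurd (h0.symm.trans hx) (BrandtG.zero_ne_some _)
    · rw [hf, BrandtG.some_inj] at hx
      exact ⟨p, congrArg Prod.fst hx⟩
  -- the main decomposition formula
  have main : ∀ (α β : Λ) (g : G),
      f α β g = f α α₀ 1 * f α₀ α₀ g * (f β α₀ 1)⁻¹ := by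
    intro α β g
    have e1 : f α β g = f α α₀ 1 * f α₀ β g := by
      have := fkey α α₀ β 1 g
      rwa [one_mul] at this
    have e2 : f α₀ β g = f α₀ α₀ g * f α₀ β 1 := by
      have := fkey α₀ α₀ β g 1
      rwa [mul_one] at this
    have e3 : f α₀ β 1 = (f β α₀ 1)⁻¹ := by
      have := fkey α₀ β α₀ 1 1
      rw [one_mul, fone] at this
      exact mul_eq_one_iff_eq_inv.mp this.symm
    rw [e1, e2, e3, mul_assoc]
  refine ⟨MulEquiv.mk (Equiv.ofBijective (f α₀ α₀) ⟨hinj, hsurj⟩)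
      (fun a b => fkey α₀ α₀ α₀ a b),
    Equiv.ofBijective φ0 ⟨hφinj, hφsurj⟩, fun α => f α α₀ 1, ?_, h0⟩
  intro α β g
  rw [hf]
  show some (φ0 α, f α β g, φ0 β)
      = some (φ0 α, f α α₀ 1 * f α₀ α₀ g * (f β α₀ 1)⁻¹, φ0 β)
  rw [main α β g]
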